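/- For every integer m ≥ 2, ∑_{d ≤ r} μ(d) (r/d)^m {r/d} = Ω(r^m); that is, there exist a constant c > 0 and infinitely many positive integers r such that |∑_{d=1}^{r} μ(d) (r/d)^m {r/d}| ≥ c · r^m. -/

import Mathlib

open Finset ArithmeticFunction

private lemma sqf6 : Squarefree 6 := by
  rw [Nat.squarefree_iff_nodup_primeFactorsList (by norm_num)]
  norm_num [Nat.primeFactorsList]

private lemma sqf10 : Squarefree 10 := by
  rw [Nat.squarefree_iff_nodup_primeFactorsList (by norm_num)]
  norm_num [Nat.primeFactorsList]

private lemma moeb1 : (moebius 1 : ℤ) = 1 := moebius_apply_one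
private lemma moeb2 : (moebius 2 : ℤ) = -1 := moebius_apply_prime (by norm_num)
private lemma moeb3 : (moebius 3 : ℤ) = -1 := moebius_apply_prime (by norm_num)
private lemma moeb5 : (moebius 5 : ℤ) = -1 := moebius_apply_prime (by norm_num)
private lemma moeb7 : (moebius 7 : ℤ) = -1 := moebius_apply_prime (by norm_num)

private lemma moeb4 : (moebius 4 : ℤ) = 0 := moebius_eq_zero_of_not_squarefree (by
  rw [Nat.squarefree_iff_nodup_primeFactorsList (by norm_num)]
  norm_num [Nat.primeFactorsList])
private lemma moeb8 : (moebius 8 : ℤ) = 0 := moebius_eq_zero_of_not_squarefree (by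
  rw [Nat.squarefree_iff_nodup_primeFactorsList (by norm_num)]
  norm_num [Nat.primeFactorsList])
private lemma moeb9 : (moebius 9 : ℤ) = 0 := moebius_eq_zero_of_not_squarefree (by
  rw [Nat.squarefree_iff_nodup_primeFactorsList (by norm_num)]
  norm_num [Nat.primeFactorsList])

private lemma moeb6 : (moebius 6 : ℤ) = 1 := by
  rw [moebius_apply_of_squarefree sqf6]
  norm_num [cardFactors_apply, Nat.primeFactorsList]

private lemma moeb10 : (moebius 10 : ℤ) = 1 := by
  rw [moebius_apply_of_squarefree sqf10]
  norm_num [cardFactors_apply, Nat.primeFactorsList]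

private lemma fract_helper {x q : ℝ} (n : ℤ) (h : x = n + q) (h0 : 0 ≤ q) (h1 : q < 1) :
    Int.fract x = q := by
  subst h; rw [Int.fract_intCast_add, Int.fract_eq_self.2 ⟨h0, h1⟩]

theorem moebius_fract_sum_omega (m : ℕ) (hm : 2 ≤ m) :
    ∃ c : ℝ, 0 < c ∧ ∀ N : ℕ, ∃ r : ℕ, N ≤ r ∧ 0 < r ∧
      c * (r : ℝ) ^ m ≤
        |∑ d ∈ Finset.Icc 1 r,
          (ArithmeticFunction.moebius d : ℝ) * ((r : ℝ) / d) ^ m * Int.fract ((r : ℝ) / d)| := by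
  obtain ⟨k, rfl⟩ : ∃ k, m = k + 2 := ⟨m - 2, by omega⟩
  refine ⟨1 / (5 * 2 ^ (k + 3)), by positivity, fun N => ?_⟩
  refine ⟨2520 * N + 2519, by omega, by omega, ?_⟩
  set r : ℕ := 2520 * N + 2519 with hrdef
  have hr10 : (10 : ℕ) ≤ r := by omega
  have hrR : (r : ℝ) = 2520 * (N : ℝ) + 2519 := by push_cast [hrdef]; ring
  have hrpos : (0:ℝ) < r := by rw [hrR]; positivity
  -- fract values at small d
  have f1 : Int.fract ((r:ℝ)/1) = 0 := by rw [div_one]; exact Int.fract_natCast r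
  have f2 : Int.fract ((r:ℝ)/2) = 1/2 :=
    fract_helper (1260*(N:ℤ)+1259) (by rw [hrR]; push_cast; ring) (by norm_num) (by norm_num)
  have f3 : Int.fract ((r:ℝ)/3) = 2/3 :=
    fract_helper (840*(N:ℤ)+839) (by rw [hrR]; push_cast; ring) (by norm_num) (by norm_num)
  have f5 : Int.fract ((r:ℝ)/5) = 4/5 :=
    fract_helper (504*(N:ℤ)+503) (by rw [hrR]; push_cast; ring) (by norm_num) (by norm_num)
  have f6 : Int.fract ((r:ℝ)/6) = 5/6 :=
    fract_helper (420*(N:ℤ)+419) (by rw [hrR]; push_cast; ring) (by norm_num) (by norm_num)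
  have f7 : Int.fract ((r:ℝ)/7) = 6/7 :=
    fract_helper (360*(N:ℤ)+359) (by rw [hrR]; push_cast; ring) (by norm_num) (by norm_num)
  have f10 : Int.fract ((r:ℝ)/10) = 9/10 :=
    fract_helper (252*(N:ℤ)+251) (by rw [hrR]; push_cast; ring) (by norm_num) (by norm_num)
  -- split the sum
  have hsplit : Finset.Icc 1 r = Finset.Icc 1 10 ∪ Finset.Ioc 10 r := by
    ext a; simp only [Finset.mem_union, Finset.mem_Icc, Finset.mem_Ioc]; omega
  have hdisj : Disjoint (Finset.Icc 1 10) (Finset.Ioc 10 r) := by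
    rw [Finset.disjoint_left]
    intro a ha hb
    simp only [Finset.mem_Icc, Finset.mem_Ioc] at ha hb
    omega
  rw [hsplit, Finset.sum_union hdisj]
  -- head bound
  have hrm : (0:ℝ) ≤ (r:ℝ)^(k+2) := by positivity
  have head_le :
      (∑ d ∈ Finset.Icc 1 10,
        (moebius d : ℝ) * ((r:ℝ)/d) ^ (k+2) * Int.fract ((r:ℝ)/d))
        ≤ -((1/8) * (1/2:ℝ)^k) * (r:ℝ)^(k+2) := by
    have hIcc : Finset.Icc 1 10 = ({1,2,3,4,5,6,7,8,9,10} : Finset ℕ) := by decide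
    rw [hIcc]
    norm_num [Finset.sum_insert, Finset.mem_insert, moeb1, moeb2, moeb3, moeb4, moeb5,
      moeb6, moeb7, moeb8, moeb9, moeb10, f1, f2, f3, f5, f6, f7, f10]
    have pw : ∀ a : ℝ, ((r:ℝ)/a)^(k+2) = (r:ℝ)^(k+2) * ((1/a)^k * (1/a)^2) := fun a => by
      rw [div_pow, div_eq_mul_one_div, ← one_div_pow, ← pow_add]
    rw [pw 2, pw 3, pw 5, pw 6, pw 7, pw 10]
    have h6 : (1/6:ℝ)^k * (r:ℝ)^(k+2) ≤ (1/3:ℝ)^k * (r:ℝ)^(k+2) :=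
      mul_le_mul_of_nonneg_right (by gcongr <;> norm_num) hrm
    have h10 : (1/10:ℝ)^k * (r:ℝ)^(k+2) ≤ (1/3:ℝ)^k * (r:ℝ)^(k+2) :=
      mul_le_mul_of_nonneg_right (by gcongr <;> norm_num) hrm
    have h5 : (0:ℝ) ≤ (1/5:ℝ)^k * (r:ℝ)^(k+2) :=
      mul_nonneg (pow_nonneg (by norm_num) k) hrm
    have h7 : (0:ℝ) ≤ (1/7:ℝ)^k * (r:ℝ)^(k+2) :=
      mul_nonneg (pow_nonneg (by norm_num) k) hrm
    have h3 : (0:ℝ) ≤ (1/3:ℝ)^k * (r:ℝ)^(k+2) :=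
      mul_nonneg (pow_nonneg (by norm_num) k) hrm
    linarith [h6, h10, h5, h7, h3]
  -- tail bound
  have tail_le :
      |∑ d ∈ Finset.Ioc 10 r,
        (moebius d : ℝ) * ((r:ℝ)/d) ^ (k+2) * Int.fract ((r:ℝ)/d)|
        ≤ ((1/10) * (1/2:ℝ)^k) * (r:ℝ)^(k+2) := by
    calc |∑ d ∈ Finset.Ioc 10 r,
        (moebius d : ℝ) * ((r:ℝ)/d) ^ (k+2) * Int.fract ((r:ℝ)/d)|
        ≤ ∑ d ∈ Finset.Ioc 10 r,
            |(moebius d : ℝ) * ((r:ℝ)/d) ^ (k+2) * Int.fract ((r:ℝ)/d)| :=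
          Finset.abs_sum_le_sum_abs _ _
      _ ≤ ∑ d ∈ Finset.Ioc 10 r, (r:ℝ)^(k+2) * ((1/11:ℝ)^k * (((d:ℝ))^2)⁻¹) := by
          apply Finset.sum_le_sum
          intro d hd
          simp only [Finset.mem_Ioc] at hd
          have hd11 : (11:ℝ) ≤ (d:ℝ) := by exact_mod_cast hd.1
          have hdpos : (0:ℝ) < (d:ℝ) := by linarith
          have hb : (0:ℝ) ≤ ((r:ℝ)/d)^(k+2) := by positivity
          have habs : |(moebius d : ℝ)| ≤ 1 := by
            have := @abs_moebius_le_one d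
            calc |(moebius d : ℝ)| = ((|moebius d| : ℤ) : ℝ) := by push_cast; ring
              _ ≤ 1 := by exact_mod_cast this
          calc |(moebius d : ℝ) * ((r:ℝ)/d) ^ (k+2) * Int.fract ((r:ℝ)/d)|
              = |(moebius d : ℝ)| * ((r:ℝ)/d) ^ (k+2) * |Int.fract ((r:ℝ)/d)| := by
                rw [abs_mul, abs_mul, abs_of_nonneg hb]
            _ ≤ 1 * ((r:ℝ)/d) ^ (k+2) * 1 := by
                have h1 := Int.fract_nonneg ((r:ℝ)/d)
                have h2 := (Int.fract_lt_one ((r:ℝ)/d)).le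
                gcongr
                rw [abs_of_nonneg h1]; exact h2
            _ = ((r:ℝ)/d) ^ (k+2) := by ring
            _ = (r:ℝ)^(k+2) * (((d:ℝ)^k)⁻¹ * (((d:ℝ))^2)⁻¹) := by
                rw [div_pow, div_eq_mul_inv,
                  show ((d:ℝ))^(k+2) = (d:ℝ)^k * (d:ℝ)^2 from pow_add _ _ _, mul_inv]
            _ ≤ (r:ℝ)^(k+2) * ((1/11:ℝ)^k * (((d:ℝ))^2)⁻¹) := by
                have : ((d:ℝ)^k)⁻¹ ≤ (1/11:ℝ)^k := by
                  rw [one_div, ← inv_pow]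
                  gcongr
                gcongr
      _ = (r:ℝ)^(k+2) * (1/11:ℝ)^k * (∑ d ∈ Finset.Ioc 10 r, (((d:ℝ))^2)⁻¹) := by
          rw [Finset.mul_sum]; congr 1; ext d; ring
      _ ≤ (r:ℝ)^(k+2) * (1/11:ℝ)^k * (1/10) := by
          gcongr
          refine (sum_Ioc_inv_sq_le_sub (α := ℝ) (by norm_num) hr10).trans ?_
          have h0 : (0:ℝ) ≤ ((r:ℕ):ℝ)⁻¹ := by positivity
          have h10 : (((10:ℕ)):ℝ)⁻¹ = 1/10 := by norm_num
          linarith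
      _ ≤ ((1/10) * (1/2:ℝ)^k) * (r:ℝ)^(k+2) := by
          have : (1/11:ℝ)^k ≤ (1/2:ℝ)^k := by gcongr <;> norm_num
          have h' := mul_le_mul_of_nonneg_left this hrm
          linarith
  -- combine
  have hc : (1 / (5 * 2 ^ (k + 3)) : ℝ) = (1/40) * (1/2:ℝ)^k := by
    have h2 : ((2:ℝ))^k ≠ 0 := by positivity
    rw [pow_add]
    rw [show ((1:ℝ)/2)^k = ((2:ℝ)^k)⁻¹ by rw [one_div, inv_pow]]
    field_simp
    ring
  rw [hc]
  set A := (∑ d ∈ Finset.Icc 1 10,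
        (moebius d : ℝ) * ((r:ℝ)/d) ^ (k+2) * Int.fract ((r:ℝ)/d)) with hA
  set B := (∑ d ∈ Finset.Ioc 10 r,
        (moebius d : ℝ) * ((r:ℝ)/d) ^ (k+2) * Int.fract ((r:ℝ)/d)) with hB
  have hBge : -(((1/10) * (1/2:ℝ)^k) * (r:ℝ)^(k+2)) ≤ B := neg_le_of_abs_le tail_le
  have : A + B ≤ -((1/40) * (1/2:ℝ)^k * (r:ℝ)^(k+2)) := by
    have hB' : B ≤ ((1/10) * (1/2:ℝ)^k) * (r:ℝ)^(k+2) := le_of_abs_le tail_le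
    linarith
  calc (1/40) * (1/2:ℝ)^k * (r:ℝ)^(k+2) ≤ -(A+B) := by linarith
    _ ≤ |A + B| := neg_le_abs _
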